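/- Let γ > 0, λ ≥ λ₁ > 0, α ∈ (0,1). With c₀ and the notation above, define J₀ = t₀^{α-1} ln t₀ · ∫_0^{c₀ t₀} e^{-ξ} b_{α,1}(λ, t₀, ξ) · F(ξ, t₀, α)/(f(ξ,t₀,α)² + g(ξ,α)²) dξ. Then for all t₀ ≥ 1, J₀ ≤ -(C₀/λ) t₀^{-α-1} ln t₀, where C₀ = C₀(γ, α, λ₁) > 0 is a constant independent of λ and t₀ (one may take C₀ = (3γ sin(απ)/(25π)) ∫_0^{c₀} e^{-ξ} ξ^α dξ). -/

import Mathlib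

open Real MeasureTheory Set

lemma aux_div (p g D F : ℝ) (hp : p ≠ 0) (hD : D ≠ 0) :
    (1/p * g / D) * (F / D) = g*F/(p*D^2) := by
  field_simp

lemma aux2 (e x s γ lam T p : ℝ) (hp : p ≠ 0) (hl : lam ≠ 0) (hT : T ≠ 0) :
    e * (-(lam*γ*x*s/(25*p*(lam*T)^2))) = -((γ*s/(25*p*(lam*(T*T)))) * (e*x)) := by
  field_simp

lemma aux3 (P L T lam γ s K p : ℝ) (hp : p ≠ 0) (hl : lam ≠ 0) (hT : T ≠ 0) :
    (P*(T*T))*L*(-(γ*s/(25*p*(lam*(T*T)))*K)) = -((γ*s*K/(25*p))/lam)*P*L := by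
  field_simp

lemma core_alg (s c u v A : ℝ) (hs : 0 < s) (hsc : s^2 + c^2 = 1)
    (hu : 0 ≤ u) (hv : 0 < v) (hA : 0 < A) (key : u + v ≤ A/2) :
    (1/π * (v*s) / ((-u + v*c + A)^2 + (v*s)^2)) *
      (((-u + v*c + A)^2 + (v*s)^2 - 2*(-u + v*c + A)*(-u + A)) / ((-u + v*c + A)^2 + (v*s)^2))
      ≤ -(v*s/(25*π*A^2)) ∧
    -(8/(π*A)) ≤ (1/π * (v*s) / ((-u + v*c + A)^2 + (v*s)^2)) *
      (((-u + v*c + A)^2 + (v*s)^2 - 2*(-u + v*c + A)*(-u + A)) / ((-u + v*c + A)^2 + (v*s)^2)) := by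
  have hπ := Real.pi_pos
  set f := -u + v*c + A with hf
  set g := v*s with hg
  have hc1 : c ≤ 1 := by nlinarith [sq_nonneg s]
  have hc2 : -1 ≤ c := by nlinarith [sq_nonneg s]
  have hs1 : s ≤ 1 := by nlinarith [sq_nonneg c]
  have hflb : A/2 ≤ f := by rw [hf]; nlinarith
  have hfub : f ≤ 3*A/2 := by rw [hf]; nlinarith
  have hglb : 0 < g := mul_pos hv hs
  have hgub : g ≤ A/2 := by rw [hg]; nlinarith
  have hf2 : (A/2)^2 ≤ f^2 := pow_le_pow_left₀ (by positivity) hflb 2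
  have hf2u : f^2 ≤ (3*A/2)^2 :=
    pow_le_pow_left₀ (le_trans (by positivity) hflb) hfub 2
  have hg2u : g^2 ≤ (A/2)^2 := pow_le_pow_left₀ hglb.le hgub 2
  set D := f^2 + g^2 with hD
  have hDlb : A^2/4 ≤ D := by rw [hD]; linarith [sq_nonneg g, hf2]
  have hDub : D ≤ 10*A^2/4 := by rw [hD]; linarith [hf2u, hg2u]
  have hD0 : 0 < D := by nlinarith
  set F := D - 2*f*(-u + A) with hF
  have hFexp : F = v^2 - (A-u)^2 := by
    rw [hF, hD, hf, hg]; linear_combination v^2 * hsc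
  have hhv : A/2 + v ≤ A - u := by linarith
  have hhv2 : (A/2 + v)^2 ≤ (A-u)^2 := pow_le_pow_left₀ (by positivity) hhv 2
  have hFub : F ≤ -(A^2/4) := by rw [hFexp]; linarith [hhv2, mul_pos hA hv]
  have hFlb : -(A^2) ≤ F := by
    rw [hFexp]
    have h9 : (A-u)^2 ≤ A^2 := pow_le_pow_left₀ (by linarith) (by linarith) 2
    linarith [sq_nonneg v]
  have hD2 : D^2 ≤ 25*A^4/4 := by linarith [pow_le_pow_left₀ hD0.le hDub 2]
  have hD2l : A^4/16 ≤ D^2 := by linarith [pow_le_pow_left₀ (by positivity : (0:ℝ) ≤ A^2/4) hDlb 2]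
  have hrw : (1/π * g / D) * (F / D) = g*F/(π*D^2) := aux_div π g D F (by positivity) hD0.ne'
  constructor
  · rw [hrw, show -(g/(25*π*A^2)) = (-g)/(25*π*A^2) by ring,
      div_le_div_iff₀ (by positivity) (by positivity)]
    have h1 : g*F ≤ g * (-(A^2/4)) := mul_le_mul_of_nonneg_left hFub hglb.le
    have h2 : π*(g*D^2) ≤ π*(g*(25*A^4/4)) :=
      mul_le_mul_of_nonneg_left (mul_le_mul_of_nonneg_left hD2 hglb.le) hπ.le
    calc g*F*(25*π*A^2) ≤ (g*(-(A^2/4)))*(25*π*A^2) :=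
          mul_le_mul_of_nonneg_right h1 (by positivity)
      _ = -(π*(g*(25*A^4/4))) := by ring
      _ ≤ -(π*(g*D^2)) := by linarith
      _ = -g*(π*D^2) := by ring
  · rw [hrw, show -(8/(π*A)) = (-8)/(π*A) by ring,
      div_le_div_iff₀ (by positivity) (by positivity)]
    have h1 : g*(-(A^2)) ≤ g*F := mul_le_mul_of_nonneg_left hFlb hglb.le
    have h2 : π*(g*A^3) ≤ π*((A/2)*A^3) :=
      mul_le_mul_of_nonneg_left (mul_le_mul_of_nonneg_right hgub (by positivity)) hπ.le
    have h3 : π*(A^4/16) ≤ π*D^2 := mul_le_mul_of_nonneg_left hD2l hπ.le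
    calc (-8)*(π*D^2) ≤ (-8)*(π*(A^4/16)) := by linarith
      _ = -(π*((A/2)*A^3)) := by ring
      _ ≤ -(π*(g*A^3)) := by linarith
      _ = (g*(-(A^2)))*(π*A) := by ring
      _ ≤ g*F*(π*A) := mul_le_mul_of_nonneg_right h1 (by positivity)

set_option maxHeartbeats 1000000 in
/-- The principal term `J₀` is bounded above by `-(C₀/λ) t₀^{-α-1} ln t₀`. -/
theorem J0_estimate (γ lam1 α c₀ : ℝ)
    (hγ : 0 < γ) (hlam1 : 0 < lam1) (hα : α ∈ Ioo (0:ℝ) 1) (hc₀ : 0 < c₀)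
    (hcase1 : γ + 1 / lam1 < 1 / 2 → 1 < c₀ ∧ c₀ < (1 / 2) * (γ + 1 / lam1)⁻¹)
    (hcase2 : 1 / 2 ≤ γ + 1 / lam1 → c₀ < 1 ∧ c₀ ^ α < (1 / 2) * (γ + 1 / lam1)⁻¹) :
    ∃ C₀ : ℝ, 0 < C₀ ∧ ∀ lam t₀ : ℝ, lam1 ≤ lam → 1 ≤ t₀ →
      t₀ ^ (α - 1) * Real.log t₀ *
        ∫ ξ in Ioc (0:ℝ) (c₀ * t₀), Real.exp (-ξ) *
          ((1 / π) * (lam * γ * ξ ^ α * Real.sin (α * π)) /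
            ((-ξ * t₀ ^ (α - 1) + lam * γ * ξ ^ α * Real.cos (α * π) + lam * t₀ ^ α) ^ 2
              + (lam * γ * ξ ^ α * Real.sin (α * π)) ^ 2)) *
          (((-ξ * t₀ ^ (α - 1) + lam * γ * ξ ^ α * Real.cos (α * π) + lam * t₀ ^ α) ^ 2
              + (lam * γ * ξ ^ α * Real.sin (α * π)) ^ 2
              - 2 * (-ξ * t₀ ^ (α - 1) + lam * γ * ξ ^ α * Real.cos (α * π) + lam * t₀ ^ α)
                  * (-ξ * t₀ ^ (α - 1) + lam * t₀ ^ α)) /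
            ((-ξ * t₀ ^ (α - 1) + lam * γ * ξ ^ α * Real.cos (α * π) + lam * t₀ ^ α) ^ 2
              + (lam * γ * ξ ^ α * Real.sin (α * π)) ^ 2))
      ≤ -(C₀ / lam) * t₀ ^ (-α - 1) * Real.log t₀ := by
  have hπ := Real.pi_pos
  have hα0 := hα.1
  have hα1 := hα.2
  set s := Real.sin (α * π) with hsdef
  have hspos : 0 < s := Real.sin_pos_of_pos_of_lt_pi (by positivity) (by nlinarith)
  have hsc : s^2 + Real.cos (α*π)^2 = 1 := Real.sin_sq_add_cos_sq (α*π)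
  -- the key smallness bound on c₀
  have hhalf : c₀ / lam1 + γ * c₀ ^ α ≤ 1/2 := by
    rcases lt_or_ge (γ + 1/lam1) (1/2) with h | h
    · obtain ⟨h1, h2⟩ := hcase1 h
      have hB : 0 < γ + 1/lam1 := by positivity
      have h2' : c₀ * (γ + 1/lam1) < 1/2 := by
        calc c₀ * (γ + 1/lam1) < (1/2 * (γ+1/lam1)⁻¹) * (γ+1/lam1) :=
              mul_lt_mul_of_pos_right h2 hB
          _ = 1/2 := by field_simp
      have hca : c₀ ^ α ≤ c₀ := by
        calc c₀ ^ α ≤ c₀ ^ (1:ℝ) := Real.rpow_le_rpow_of_exponent_le h1.le hα1.le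
          _ = c₀ := Real.rpow_one c₀
      have h3 : γ * c₀^α ≤ γ * c₀ := mul_le_mul_of_nonneg_left hca hγ.le
      have hexpand : c₀ * (γ + 1/lam1) = γ*c₀ + c₀/lam1 := by ring
      linarith
    · obtain ⟨h1, h2⟩ := hcase2 h
      have hB : 0 < γ + 1/lam1 := by positivity
      have h2' : c₀^α * (γ + 1/lam1) < 1/2 := by
        calc c₀^α * (γ + 1/lam1) < (1/2 * (γ+1/lam1)⁻¹) * (γ+1/lam1) :=
              mul_lt_mul_of_pos_right h2 hB
          _ = 1/2 := by field_simp
      have hca : c₀ ≤ c₀ ^ α := by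
        calc c₀ = c₀ ^ (1:ℝ) := (Real.rpow_one c₀).symm
          _ ≤ c₀ ^ α := Real.rpow_le_rpow_of_exponent_ge hc₀ h1.le hα1.le
      have hd : c₀/lam1 ≤ c₀^α/lam1 := by gcongr
      have hexpand : c₀^α * (γ + 1/lam1) = γ*c₀^α + c₀^α/lam1 := by ring
      linarith
  -- the constant
  set K := ∫ ξ in Ioc (0:ℝ) c₀, Real.exp (-ξ) * ξ ^ α with hKdef
  have hxα : ∀ b : ℝ, ContinuousOn (fun ξ:ℝ => Real.exp (-ξ) * ξ ^ α) (Icc 0 b) := by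
    intro b
    exact (Real.continuous_exp.comp continuous_neg).continuousOn.mul
      (continuousOn_id.rpow_const (fun x _ => Or.inr hα0.le))
  have hKpos : 0 < K := by
    rw [hKdef, ← intervalIntegral.integral_of_le hc₀.le]
    apply intervalIntegral.intervalIntegral_pos_of_pos_on
    · apply ContinuousOn.intervalIntegrable
      rw [uIcc_of_le hc₀.le]
      exact hxα c₀
    · intro x hx
      have : (0:ℝ) < x ^ α := Real.rpow_pos_of_pos hx.1 α
      positivity
    · exact hc₀
  refine ⟨γ * s * K / (25*π), by positivity, ?_⟩
  intro lam t₀ hlam ht₀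
  have hlampos : 0 < lam := lt_of_lt_of_le hlam1 hlam
  have ht0 : 0 < t₀ := lt_of_lt_of_le one_pos ht₀
  have hT : 0 < t₀ ^ α := Real.rpow_pos_of_pos ht0 α
  have hT1 : 1 ≤ t₀ ^ α := by
    calc (1:ℝ) = (1:ℝ) ^ α := (Real.one_rpow α).symm
      _ ≤ t₀ ^ α := Real.rpow_le_rpow (by norm_num) ht₀ hα0.le
  have hTm : 0 < t₀ ^ (α-1) := Real.rpow_pos_of_pos ht0 (α-1)
  have hA : 0 < lam * t₀ ^ α := mul_pos hlampos hT
  have hA1 : lam1 ≤ lam * t₀ ^ α := by nlinarith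
  -- multiplied form of the key bound
  have hlamkey : c₀ + lam*(γ*c₀^α) ≤ lam/2 := by
    have hq1 : c₀/lam ≤ c₀/lam1 := by gcongr
    have hq : c₀/lam + γ*c₀^α ≤ 1/2 := by linarith
    have h := mul_le_mul_of_nonneg_left hq hlampos.le
    have hc : lam*(c₀/lam) = c₀ := by field_simp
    nlinarith [h, hc]
  set coef := γ*s/(25*π*(lam*(t₀^α*t₀^α))) with hcoefdef
  have hcoef0 : 0 ≤ coef := by
    rw [hcoefdef]
    exact div_nonneg (mul_nonneg hγ.le hspos.le) (by positivity)
  -- pointwise bounds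
  have hpt : ∀ ξ ∈ Ioc (0:ℝ) (c₀ * t₀),
      (Real.exp (-ξ) *
          ((1 / π) * (lam * γ * ξ ^ α * s) /
            ((-ξ * t₀ ^ (α - 1) + lam * γ * ξ ^ α * Real.cos (α * π) + lam * t₀ ^ α) ^ 2
              + (lam * γ * ξ ^ α * s) ^ 2)) *
          (((-ξ * t₀ ^ (α - 1) + lam * γ * ξ ^ α * Real.cos (α * π) + lam * t₀ ^ α) ^ 2
              + (lam * γ * ξ ^ α * s) ^ 2
              - 2 * (-ξ * t₀ ^ (α - 1) + lam * γ * ξ ^ α * Real.cos (α * π) + lam * t₀ ^ α)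
                  * (-ξ * t₀ ^ (α - 1) + lam * t₀ ^ α)) /
            ((-ξ * t₀ ^ (α - 1) + lam * γ * ξ ^ α * Real.cos (α * π) + lam * t₀ ^ α) ^ 2
              + (lam * γ * ξ ^ α * s) ^ 2)))
        ≤ -(coef * (Real.exp (-ξ) * ξ ^ α)) ∧
      -(8/(π*lam1)) ≤
      (Real.exp (-ξ) *
          ((1 / π) * (lam * γ * ξ ^ α * s) /
            ((-ξ * t₀ ^ (α - 1) + lam * γ * ξ ^ α * Real.cos (α * π) + lam * t₀ ^ α) ^ 2
              + (lam * γ * ξ ^ α * s) ^ 2)) *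
          (((-ξ * t₀ ^ (α - 1) + lam * γ * ξ ^ α * Real.cos (α * π) + lam * t₀ ^ α) ^ 2
              + (lam * γ * ξ ^ α * s) ^ 2
              - 2 * (-ξ * t₀ ^ (α - 1) + lam * γ * ξ ^ α * Real.cos (α * π) + lam * t₀ ^ α)
                  * (-ξ * t₀ ^ (α - 1) + lam * t₀ ^ α)) /
            ((-ξ * t₀ ^ (α - 1) + lam * γ * ξ ^ α * Real.cos (α * π) + lam * t₀ ^ α) ^ 2
              + (lam * γ * ξ ^ α * s) ^ 2))) := by
    intro ξ hξ
    obtain ⟨hξ1, hξ2⟩ := hξ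
    have hu : 0 ≤ ξ * t₀ ^ (α-1) := by positivity
    have hv : 0 < lam * γ * ξ ^ α := by
      have := Real.rpow_pos_of_pos hξ1 α; positivity
    -- key inequality for this ξ
    have ht1 : t₀ ^ (α-1) * t₀ = t₀ ^ α := by
      rw [← Real.rpow_add_one ht0.ne' (α-1)]; norm_num
    have e1 : ξ * t₀ ^ (α-1) ≤ c₀ * t₀ ^ α := by
      calc ξ * t₀ ^ (α-1) ≤ (c₀*t₀) * t₀ ^ (α-1) :=
            mul_le_mul_of_nonneg_right hξ2 hTm.le
        _ = c₀ * (t₀ ^ (α-1) * t₀) := by ring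
        _ = c₀ * t₀ ^ α := by rw [ht1]
    have e2 : ξ ^ α ≤ c₀ ^ α * t₀ ^ α := by
      rw [← Real.mul_rpow hc₀.le ht0.le]
      exact Real.rpow_le_rpow hξ1.le hξ2 hα0.le
    have e3 : lam * γ * ξ ^ α ≤ lam * γ * (c₀^α * t₀^α) :=
      mul_le_mul_of_nonneg_left e2 (by positivity)
    have e4 : (c₀ + lam*(γ*c₀^α)) * t₀^α ≤ (lam/2) * t₀^α :=
      mul_le_mul_of_nonneg_right hlamkey hT.le
    have hkeyξ : ξ * t₀ ^ (α-1) + lam * γ * ξ ^ α ≤ (lam * t₀ ^ α)/2 := by nlinarith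
    obtain ⟨h1, h2⟩ := core_alg s (Real.cos (α*π)) (ξ * t₀ ^ (α-1)) (lam * γ * ξ ^ α)
      (lam * t₀ ^ α) hspos hsc hu hv hA hkeyξ
    constructor
    · simp only [neg_mul]
      rw [mul_assoc]
      refine le_trans (mul_le_mul_of_nonneg_left h1 (Real.exp_nonneg _)) (le_of_eq ?_)
      exact aux2 (Real.exp (-ξ)) (ξ^α) s γ lam (t₀^α) π hπ.ne' hlampos.ne' hT.ne'
    · simp only [neg_mul]
      rw [mul_assoc]
      have hBC0 : (1/π * (lam * γ * ξ ^ α * s) / _) * _ ≤ 0 := le_trans h1 (by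
        have : 0 ≤ (lam * γ * ξ ^ α)*s/(25*π*(lam * t₀ ^ α)^2) := by positivity
        linarith)
      have he1 : Real.exp (-ξ) ≤ 1 := Real.exp_le_one_iff.mpr (by linarith)
      have hstep : 8/(π*(lam * t₀ ^ α)) ≤ 8/(π*lam1) → True := fun _ => trivial
      have hmono : 8/(π*(lam * t₀ ^ α)) ≤ 8/(π*lam1) := by gcongr
      have := mul_le_mul_of_nonpos_right he1 hBC0
      calc -(8/(π*lam1)) ≤ -(8/(π*(lam * t₀ ^ α))) := by linarith
        _ ≤ _ := h2
        _ = 1 * _ := (one_mul _).symm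
        _ ≤ Real.exp (-ξ) * _ := this
  -- measurability of the integrand
  have hm : Measurable (fun ξ : ℝ => Real.exp (-ξ) *
          ((1 / π) * (lam * γ * ξ ^ α * s) /
            ((-ξ * t₀ ^ (α - 1) + lam * γ * ξ ^ α * Real.cos (α * π) + lam * t₀ ^ α) ^ 2
              + (lam * γ * ξ ^ α * s) ^ 2)) *
          (((-ξ * t₀ ^ (α - 1) + lam * γ * ξ ^ α * Real.cos (α * π) + lam * t₀ ^ α) ^ 2
              + (lam * γ * ξ ^ α * s) ^ 2
              - 2 * (-ξ * t₀ ^ (α - 1) + lam * γ * ξ ^ α * Real.cos (α * π) + lam * t₀ ^ α)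
                  * (-ξ * t₀ ^ (α - 1) + lam * t₀ ^ α)) /
            ((-ξ * t₀ ^ (α - 1) + lam * γ * ξ ^ α * Real.cos (α * π) + lam * t₀ ^ α) ^ 2
              + (lam * γ * ξ ^ α * s) ^ 2))) := by
    have hm1 : Measurable (fun ξ : ℝ => ξ ^ α) := (Real.continuous_rpow_const hα0.le).measurable
    fun_prop
  have hmeasS : MeasurableSet (Ioc (0:ℝ) (c₀*t₀)) := measurableSet_Ioc
  have hχint : IntegrableOn (fun ξ:ℝ => Real.exp (-ξ) * ξ ^ α) (Ioc (0:ℝ) (c₀*t₀)) :=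
    ((hxα (c₀*t₀)).integrableOn_Icc).mono_set Ioc_subset_Icc_self
  have hψint : IntegrableOn (fun ξ:ℝ => -(coef * (Real.exp (-ξ) * ξ ^ α))) (Ioc (0:ℝ) (c₀*t₀)) :=
    (hχint.const_mul coef).neg
  have hexprint : IntegrableOn (fun ξ : ℝ => Real.exp (-ξ) *
          ((1 / π) * (lam * γ * ξ ^ α * s) /
            ((-ξ * t₀ ^ (α - 1) + lam * γ * ξ ^ α * Real.cos (α * π) + lam * t₀ ^ α) ^ 2
              + (lam * γ * ξ ^ α * s) ^ 2)) *
          (((-ξ * t₀ ^ (α - 1) + lam * γ * ξ ^ α * Real.cos (α * π) + lam * t₀ ^ α) ^ 2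
              + (lam * γ * ξ ^ α * s) ^ 2
              - 2 * (-ξ * t₀ ^ (α - 1) + lam * γ * ξ ^ α * Real.cos (α * π) + lam * t₀ ^ α)
                  * (-ξ * t₀ ^ (α - 1) + lam * t₀ ^ α)) /
            ((-ξ * t₀ ^ (α - 1) + lam * γ * ξ ^ α * Real.cos (α * π) + lam * t₀ ^ α) ^ 2
              + (lam * γ * ξ ^ α * s) ^ 2))) (Ioc (0:ℝ) (c₀*t₀)) := by
    refine Integrable.mono' (g := fun _ => 8/(π*lam1))
      (integrableOn_const (C := 8/(π*lam1)) measure_Ioc_lt_top.ne enorm_ne_top) hm.aestronglyMeasurable ?_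
    rw [ae_restrict_iff' hmeasS]
    refine ae_of_all _ (fun ξ hξ => ?_)
    obtain ⟨hle, hge⟩ := hpt ξ hξ
    have h0 : 0 ≤ coef * (Real.exp (-ξ) * ξ ^ α) :=
      mul_nonneg hcoef0 (mul_nonneg (Real.exp_nonneg _) (Real.rpow_nonneg hξ.1.le α))
    have h8 : (0:ℝ) ≤ 8/(π*lam1) := by positivity
    rw [Real.norm_eq_abs, abs_le]
    exact ⟨hge, by linarith⟩
  have step1 : (∫ ξ in Ioc (0:ℝ) (c₀*t₀), Real.exp (-ξ) *
          ((1 / π) * (lam * γ * ξ ^ α * s) /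
            ((-ξ * t₀ ^ (α - 1) + lam * γ * ξ ^ α * Real.cos (α * π) + lam * t₀ ^ α) ^ 2
              + (lam * γ * ξ ^ α * s) ^ 2)) *
          (((-ξ * t₀ ^ (α - 1) + lam * γ * ξ ^ α * Real.cos (α * π) + lam * t₀ ^ α) ^ 2
              + (lam * γ * ξ ^ α * s) ^ 2
              - 2 * (-ξ * t₀ ^ (α - 1) + lam * γ * ξ ^ α * Real.cos (α * π) + lam * t₀ ^ α)
                  * (-ξ * t₀ ^ (α - 1) + lam * t₀ ^ α)) /
            ((-ξ * t₀ ^ (α - 1) + lam * γ * ξ ^ α * Real.cos (α * π) + lam * t₀ ^ α) ^ 2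
              + (lam * γ * ξ ^ α * s) ^ 2)))
      ≤ ∫ ξ in Ioc (0:ℝ) (c₀*t₀), -(coef * (Real.exp (-ξ) * ξ ^ α)) :=
    setIntegral_mono_on hexprint hψint hmeasS (fun ξ hξ => (hpt ξ hξ).1)
  have step2 : (∫ ξ in Ioc (0:ℝ) (c₀*t₀), -(coef * (Real.exp (-ξ) * ξ ^ α)))
      = -(coef * ∫ ξ in Ioc (0:ℝ) (c₀*t₀), Real.exp (-ξ) * ξ ^ α) := by
    rw [integral_neg]
    congr 1
    exact integral_const_mul coef _
  have hsub : Ioc (0:ℝ) c₀ ⊆ Ioc (0:ℝ) (c₀*t₀) := Ioc_subset_Ioc le_rfl (by nlinarith)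
  have step3 : K ≤ ∫ ξ in Ioc (0:ℝ) (c₀*t₀), Real.exp (-ξ) * ξ ^ α := by
    rw [hKdef]
    refine setIntegral_mono_set hχint ?_ (HasSubset.Subset.eventuallyLE hsub)
    exact (ae_restrict_iff' hmeasS).2 (ae_of_all _ (fun ξ hξ =>
      mul_nonneg (Real.exp_nonneg _) (Real.rpow_nonneg hξ.1.le α)))
  have hIle := le_trans step1 (le_of_eq step2)
  have hIle2 : (∫ ξ in Ioc (0:ℝ) (c₀*t₀), Real.exp (-ξ) *
          ((1 / π) * (lam * γ * ξ ^ α * s) /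
            ((-ξ * t₀ ^ (α - 1) + lam * γ * ξ ^ α * Real.cos (α * π) + lam * t₀ ^ α) ^ 2
              + (lam * γ * ξ ^ α * s) ^ 2)) *
          (((-ξ * t₀ ^ (α - 1) + lam * γ * ξ ^ α * Real.cos (α * π) + lam * t₀ ^ α) ^ 2
              + (lam * γ * ξ ^ α * s) ^ 2
              - 2 * (-ξ * t₀ ^ (α - 1) + lam * γ * ξ ^ α * Real.cos (α * π) + lam * t₀ ^ α)
                  * (-ξ * t₀ ^ (α - 1) + lam * t₀ ^ α)) /
            ((-ξ * t₀ ^ (α - 1) + lam * γ * ξ ^ α * Real.cos (α * π) + lam * t₀ ^ α) ^ 2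
              + (lam * γ * ξ ^ α * s) ^ 2)))
      ≤ -(coef * K) := by
    have h := mul_le_mul_of_nonneg_left step3 hcoef0
    linarith
  have hnn : 0 ≤ t₀ ^ (α-1) * Real.log t₀ := mul_nonneg hTm.le (Real.log_nonneg ht₀)
  refine le_trans (mul_le_mul_of_nonneg_left hIle2 hnn) (le_of_eq ?_)
  have hTT : t₀ ^ (α-1) = t₀ ^ (-α-1) * (t₀^α * t₀^α) := by
    rw [← Real.rpow_add ht0 α α, ← Real.rpow_add ht0]
    congr 1; ring
  rw [hTT, hcoefdef]
  exact aux3 (t₀^(-α-1)) (Real.log t₀) (t₀^α) lam γ s K π hπ.ne' hlampos.ne' hT.ne'
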